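/- Let K ≥ 1 and L ≥ 1 be fixed integers, ρ > 0, and for each k ∈ {1, …, K} let β_k > 0 and m_k ≥ 1/2. For each N > L, let {W_{n,k,N} : 1 ≤ n ≤ N, 1 ≤ k ≤ K} be independent real random variables, where W_{n,k,N} has the normalized Gamma(m_k) distribution, let T_{k,N} be the top-L sum of (W_{1,k,N}, …, W_{N,k,N}), and set R_N := Σ_{k=1}^K log₂(1 + ρ β_k T_{k,N}). Then R_N divided by its deterministic equivalent Σ_{k=1}^K log₂(1 + ρ β_k (L/m_k) log N) converges to 1 in probability as N → ∞. -/

import Mathlib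

open MeasureTheory ProbabilityTheory Filter Real

/-- The top-`L` sum of the values `w 0, …, w (N-1)`: the maximum over subsets `S` of
cardinality `L` of `∑ n ∈ S, w n`, i.e. the sum of the `L` largest values. -/
noncomputable def topSum {N : ℕ} (L : ℕ) (w : Fin N → ℝ) : ℝ :=
  sSup {x : ℝ | ∃ S : Finset (Fin N), S.card = L ∧ x = ∑ n ∈ S, w n}

set_option maxHeartbeats 1600000

open scoped ENNReal NNReal
open Set


section TopSum

variable {N L : ℕ} {w : Fin N → ℝ}

lemma topSum_set_finite : {x : ℝ | ∃ S : Finset (Fin N), S.card = L ∧ x = ∑ n ∈ S, w n}.Finite := by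
  apply (Set.finite_range (fun S : Finset (Fin N) => ∑ n ∈ S, w n)).subset
  rintro x ⟨S, -, rfl⟩
  exact ⟨S, rfl⟩

lemma le_topSum (S : Finset (Fin N)) (hS : S.card = L) : ∑ n ∈ S, w n ≤ topSum L w :=
  le_csSup topSum_set_finite.bddAbove ⟨S, hS, rfl⟩

lemma topSum_le (hLN : L ≤ N) {B : ℝ}
    (hB : ∀ S : Finset (Fin N), S.card = L → ∑ n ∈ S, w n ≤ B) : topSum L w ≤ B := by
  obtain ⟨S, -, hS⟩ := Finset.exists_subset_card_eq (s := (Finset.univ : Finset (Fin N)))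
    (n := L) (by simpa using hLN)
  refine csSup_le ⟨_, ⟨S, hS, rfl⟩⟩ ?_
  rintro x ⟨S', hS', rfl⟩
  exact hB S' hS'

lemma topSum_le_card_mul (hLN : L ≤ N) {B : ℝ} (hB : ∀ n, w n ≤ B) :
    topSum L w ≤ L * B := by
  refine topSum_le hLN fun S hS => ?_
  calc ∑ n ∈ S, w n ≤ ∑ n ∈ S, B := Finset.sum_le_sum fun n _ => hB n
  _ = L * B := by rw [Finset.sum_const, hS, nsmul_eq_mul]

lemma card_mul_le_topSum {t : ℝ} {T : Finset (Fin N)} (hT : L ≤ T.card)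
    (ht : ∀ n ∈ T, t ≤ w n) : L * t ≤ topSum L w := by
  obtain ⟨S, hST, hS⟩ := Finset.exists_subset_card_eq hT
  refine le_trans ?_ (le_topSum S hS)
  calc (L : ℝ) * t = ∑ _n ∈ S, t := by rw [Finset.sum_const, hS, nsmul_eq_mul]
  _ ≤ ∑ n ∈ S, w n := Finset.sum_le_sum fun n hn => ht n (hST hn)

end TopSum

lemma my_tendsto_exp_neg_mul {b : ℝ} (hb : 0 < b) :
    Tendsto (fun x : ℝ => Real.exp (-(b * x))) atTop (nhds 0) := by
  have h : Tendsto (fun x : ℝ => -(b * x)) atTop atBot :=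
    tendsto_neg_atTop_atBot.comp (tendsto_id.const_mul_atTop hb)
  exact Real.tendsto_exp_atBot.comp h

lemma my_integral_exp_neg_mul_Ioi {b t : ℝ} (hb : 0 < b) :
    ∫ x in Ioi t, Real.exp (-(b * x)) = Real.exp (-(b * t)) / b := by
  have hderiv : ∀ x ∈ Ici t, HasDerivAt (fun x => -Real.exp (-(b * x)) / b)
      (Real.exp (-(b * x))) x := by
    intro x _
    have h1 : HasDerivAt (fun x : ℝ => -(b * x)) (-b) x := by
      have h := ((hasDerivAt_id x).const_mul b).neg; rw [mul_one] at h; exact h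
    have h2 := (Real.hasDerivAt_exp (-(b * x))).comp x h1
    have h3 := (h2.neg).div_const b
    rw [mul_neg, neg_neg, mul_div_cancel_right₀ _ hb.ne'] at h3
    exact h3
  have hint : IntegrableOn (fun x => Real.exp (-(b * x))) (Ioi t) := by
    simpa [neg_mul] using exp_neg_integrableOn_Ioi t hb
  have htend : Tendsto (fun x => -Real.exp (-(b * x)) / b) atTop (nhds 0) := by
    have := ((my_tendsto_exp_neg_mul hb).neg).div_const b
    simpa using this
  rw [MeasureTheory.integral_Ioi_of_hasDerivAt_of_tendsto' hderiv hint htend]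
  field_simp
  ring

lemma gamma_tail_upper {m : ℝ} (hm : 1 / 2 ≤ m) :
    ∃ C > (0:ℝ), ∀ t : ℝ, 1 ≤ t →
      gammaMeasure m m (Ici t) ≤ ENNReal.ofReal (C * Real.exp (-(9 / 10 * m * t))) := by
  have hm0 : 0 < m := lt_of_lt_of_le (by norm_num) hm
  set a : ℝ := max (m - 1) 0 with ha_def
  have ha : 0 ≤ a := le_max_right _ _
  set lam : ℝ := (10 * a + 1) / m with hlam_def
  have hlam : 0 < lam := by positivity
  have hG : 0 < Real.Gamma m := Real.Gamma_pos_of_pos hm0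
  set C₁ : ℝ := m ^ m / Real.Gamma m * lam ^ a with hC1_def
  have hC₁ : 0 < C₁ := by
    have : (0:ℝ) < m ^ m := Real.rpow_pos_of_pos hm0 m
    positivity
  set κ : ℝ := 9 / 10 * m with hκ_def
  have hκ : 0 < κ := by positivity
  refine ⟨C₁ / κ, by positivity, fun t ht => ?_⟩
  -- pointwise bound
  have hpt : ∀ x : ℝ, 1 ≤ x → gammaPDFReal m m x ≤ C₁ * Real.exp (-(κ * x)) := by
    intro x hx
    have hx0 : (0:ℝ) ≤ x := by linarith
    rw [gammaPDFReal, if_pos hx0]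
    have h1 : x ^ (m - 1) ≤ x ^ a :=
      Real.rpow_le_rpow_of_exponent_le hx (le_max_left _ _)
    have h2 : x ≤ lam * Real.exp (x / lam) := by
      have := Real.add_one_le_exp (x / lam)
      have h' : x / lam ≤ Real.exp (x / lam) := by linarith
      calc x = lam * (x / lam) := by field_simp
      _ ≤ lam * Real.exp (x / lam) := by
          exact mul_le_mul_of_nonneg_left h' hlam.le
    have h3 : x ^ a ≤ lam ^ a * Real.exp (a / lam * x) := by
      calc x ^ a ≤ (lam * Real.exp (x / lam)) ^ a := Real.rpow_le_rpow hx0 h2 ha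
      _ = lam ^ a * (Real.exp (x / lam)) ^ a := Real.mul_rpow hlam.le (Real.exp_nonneg _)
      _ = lam ^ a * Real.exp (x / lam * a) := by rw [Real.exp_mul]
      _ = lam ^ a * Real.exp (a / lam * x) := by ring_nf
    have h4 : a / lam * x + -(m * x) ≤ -(κ * x) := by
      have hal : a / lam ≤ m / 10 := by
        rw [hlam_def, div_div_eq_mul_div, div_le_div_iff₀ (by positivity) (by norm_num)]
        nlinarith
      nlinarith [hx]
    calc m ^ m / Real.Gamma m * x ^ (m - 1) * Real.exp (-(m * x))
        ≤ m ^ m / Real.Gamma m * (lam ^ a * Real.exp (a / lam * x)) * Real.exp (-(m * x)) := by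
          have : x ^ (m-1) ≤ lam ^ a * Real.exp (a / lam * x) := h1.trans h3
          have hpos : (0:ℝ) ≤ m ^ m / Real.Gamma m := by positivity
          exact mul_le_mul_of_nonneg_right (mul_le_mul_of_nonneg_left this hpos)
            (Real.exp_nonneg _)
    _ = C₁ * Real.exp (a / lam * x + -(m * x)) := by rw [Real.exp_add]; ring
    _ ≤ C₁ * Real.exp (-(κ * x)) := by
          exact mul_le_mul_of_nonneg_left (Real.exp_le_exp.mpr h4) hC₁.le
  -- measure bound
  have hmeasure : gammaMeasure m m (Ici t) = ∫⁻ x in Ici t, gammaPDF m m x := by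
    rw [gammaMeasure, withDensity_apply _ measurableSet_Ici]
  rw [hmeasure]
  have hstep : ∫⁻ x in Ici t, gammaPDF m m x
      ≤ ∫⁻ x in Ici t, ENNReal.ofReal (C₁ * Real.exp (-(κ * x))) := by
    apply setLIntegral_mono (((measurable_id'.const_mul κ).neg.exp.const_mul C₁).ennreal_ofReal)
    intro x hx
    rw [gammaPDF]
    exact ENNReal.ofReal_le_ofReal (hpt x (le_trans ht hx))
  refine hstep.trans ?_
  have hInt : IntegrableOn (fun x => C₁ * Real.exp (-(κ * x))) (Ici t) := by
    rw [integrableOn_Ici_iff_integrableOn_Ioi]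
    have hInt0 : IntegrableOn (fun x => Real.exp (-(κ * x))) (Ioi t) := by
      simpa [neg_mul] using exp_neg_integrableOn_Ioi t hκ
    exact hInt0.const_mul C₁
  rw [← MeasureTheory.ofReal_integral_eq_lintegral_ofReal hInt
    (ae_of_all _ fun x => by positivity)]
  apply ENNReal.ofReal_le_ofReal
  rw [integral_Ici_eq_integral_Ioi, integral_const_mul, my_integral_exp_neg_mul_Ioi hκ]
  exact le_of_eq (by ring)

lemma gamma_tail_lower {m : ℝ} (hm : 1 / 2 ≤ m) :
    ∃ c > (0:ℝ), ∀ t : ℝ, 1 ≤ t →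
      ENNReal.ofReal (c * Real.exp (-(m * t)) / (t + 1)) ≤ gammaMeasure m m (Ici t) := by
  have hm0 : 0 < m := lt_of_lt_of_le (by norm_num) hm
  have hG : 0 < Real.Gamma m := Real.Gamma_pos_of_pos hm0
  have hmm : (0:ℝ) < m ^ m := Real.rpow_pos_of_pos hm0 m
  refine ⟨m ^ m / Real.Gamma m * Real.exp (-m), by positivity, fun t ht => ?_⟩
  have ht0 : (0:ℝ) < t := by linarith
  have ht1 : (0:ℝ) < t + 1 := by linarith
  -- pointwise lower bound on [t, t+1]
  have hpt : ∀ x ∈ Icc t (t + 1),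
      m ^ m / Real.Gamma m * Real.exp (-m) * Real.exp (-(m * t)) / (t + 1)
        ≤ gammaPDFReal m m x := by
    intro x hx
    obtain ⟨hx1, hx2⟩ := hx
    have hx0 : (0:ℝ) < x := lt_of_lt_of_le ht0 hx1
    rw [gammaPDFReal, if_pos hx0.le]
    have h1 : 1 / (t + 1) ≤ x ^ (m - 1) := by
      rcases le_or_gt 1 m with hm1 | hm1
      · have : (1:ℝ) ≤ x ^ (m - 1) :=
          Real.one_le_rpow (le_trans ht hx1) (by linarith)
        calc 1 / (t + 1) ≤ 1 := by rw [div_le_one ht1]; linarith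
        _ ≤ x ^ (m - 1) := this
      · have h2 : (t + 1) ^ (m - 1) ≤ x ^ (m - 1) :=
          Real.rpow_le_rpow_of_nonpos hx0 hx2 (by linarith)
        have h3 : (t + 1) ^ (-1 : ℝ) ≤ (t + 1) ^ (m - 1) :=
          Real.rpow_le_rpow_of_exponent_le (by linarith) (by linarith)
        calc 1 / (t + 1) = (t + 1) ^ (-1 : ℝ) := by
              rw [Real.rpow_neg_one]; rw [one_div]
        _ ≤ (t + 1) ^ (m - 1) := h3
        _ ≤ x ^ (m - 1) := h2
    have h4 : Real.exp (-m) * Real.exp (-(m * t)) ≤ Real.exp (-(m * x)) := by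
      rw [← Real.exp_add]
      apply Real.exp_le_exp.mpr
      nlinarith
    calc m ^ m / Real.Gamma m * Real.exp (-m) * Real.exp (-(m * t)) / (t + 1)
        = m ^ m / Real.Gamma m * (1 / (t + 1)) * (Real.exp (-m) * Real.exp (-(m * t))) := by
          ring
    _ ≤ m ^ m / Real.Gamma m * x ^ (m - 1) * Real.exp (-(m * x)) := by
        have hc : (0:ℝ) ≤ m ^ m / Real.Gamma m := by positivity
        have h1' : (0:ℝ) ≤ 1 / (t + 1) := by positivity
        have h4' : (0:ℝ) ≤ Real.exp (-m) * Real.exp (-(m * t)) := by positivity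
        gcongr
  -- measure bound
  have hmeasure : gammaMeasure m m (Ici t) = ∫⁻ x in Ici t, gammaPDF m m x := by
    rw [gammaMeasure, withDensity_apply _ measurableSet_Ici]
  rw [hmeasure]
  have hsub : ∫⁻ x in Icc t (t + 1), gammaPDF m m x ≤ ∫⁻ x in Ici t, gammaPDF m m x :=
    lintegral_mono_set (Icc_subset_Ici_self)
  refine le_trans ?_ hsub
  have hconst : ∫⁻ _ in Icc t (t + 1),
      ENNReal.ofReal (m ^ m / Real.Gamma m * Real.exp (-m) * Real.exp (-(m * t)) / (t + 1))
        = ENNReal.ofReal (m ^ m / Real.Gamma m * Real.exp (-m) * Real.exp (-(m * t)) / (t + 1)) := by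
    rw [setLIntegral_const, Real.volume_Icc]
    norm_num
  rw [← hconst]
  apply setLIntegral_mono' measurableSet_Icc
  intro x hx
  rw [gammaPDF]
  exact ENNReal.ofReal_le_ofReal (hpt x hx)

lemma prob_bad_le
    {Ωt : Type} [MeasurableSpace Ωt] (P : Measure Ωt) [IsProbabilityMeasure P]
    {N K L : ℕ} (hL : 1 ≤ L) (hLN : L < N)
    (mk : Fin K → ℝ)
    (W : Fin N × Fin K → Ωt → ℝ)
    (hmeas : ∀ p, Measurable (W p))
    (hindep : iIndepFun W P)
    (hdist : ∀ p, P.map (W p) = gammaMeasure (mk p.2) (mk p.2))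
    (k : Fin K) (t₀ t₁ : ℝ) :
    P {ω | ¬((L:ℝ) * t₀ ≤ topSum L (fun n => W (n, k) ω) ∧
        topSum L (fun n => W (n, k) ω) ≤ (L:ℝ) * t₁)}
      ≤ N * gammaMeasure (mk k) (mk k) (Ici t₁)
        + L * (gammaMeasure (mk k) (mk k) (Iio t₀)) ^ (N / L) := by
  have hL0 : 0 < L := hL
  set s : ℕ := N / L with hs_def
  have hs1 : 1 ≤ s := (Nat.one_le_div_iff hL0).mpr hLN.le
  have hsL : L * s ≤ N := by rw [hs_def, mul_comm]; exact Nat.div_mul_le_self N L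
  have hι : ∀ (j : Fin L) (i : Fin s), j.1 * s + i.1 < N := by
    intro j i
    calc j.1 * s + i.1 < j.1 * s + s := by omega
    _ = (j.1 + 1) * s := by ring
    _ ≤ L * s := Nat.mul_le_mul_right s j.2
    _ ≤ N := hsL
  set ι : Fin L → Fin s → Fin N := fun j i => ⟨j.1 * s + i.1, hι j i⟩ with hι_def
  -- the events
  set A : Set Ωt := ⋃ n : Fin N, W (n, k) ⁻¹' Ioi t₁ with hA_def
  set B : Set Ωt := ⋃ j : Fin L, ⋂ i : Fin s, W (ι j i, k) ⁻¹' Iio t₀ with hB_def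
  have hincl : {ω | ¬((L:ℝ) * t₀ ≤ topSum L (fun n => W (n, k) ω) ∧
      topSum L (fun n => W (n, k) ω) ≤ (L:ℝ) * t₁)} ⊆ A ∪ B := by
    intro ω hω
    by_contra hc
    apply hω
    rw [Set.mem_union] at hc
    push_neg at hc
    obtain ⟨hcA, hcB⟩ := hc
    simp only [hA_def, Set.mem_iUnion, Set.mem_preimage, Set.mem_Ioi, not_exists, not_lt] at hcA
    simp only [hB_def, Set.mem_iUnion, Set.mem_iInter, Set.mem_preimage, Set.mem_Iio, not_exists,
      not_forall, not_lt] at hcB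
    constructor
    · -- lower bound
      choose f hf using hcB
      have hinj : Function.Injective (fun j : Fin L => ι j (f j)) := by
        intro j j' hjj'
        have hval : j.1 * s + (f j).1 = j'.1 * s + (f j').1 := by
          simpa [hι_def] using congrArg Fin.val hjj'
        by_contra hne
        rcases Nat.lt_or_ge j.1 j'.1 with h | h
        · have : j.1 * s + (f j).1 < j'.1 * s + (f j').1 := by
            calc j.1 * s + (f j).1 < j.1 * s + s := by omega
            _ = (j.1 + 1) * s := by ring
            _ ≤ j'.1 * s := Nat.mul_le_mul_right s h
            _ ≤ j'.1 * s + (f j').1 := Nat.le_add_right _ _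
          omega
        · have hlt : j'.1 < j.1 := by
            rcases Nat.lt_or_ge j'.1 j.1 with h' | h'
            · exact h'
            · exfalso; exact hne (Fin.ext (by omega))
          have : j'.1 * s + (f j').1 < j.1 * s + (f j).1 := by
            calc j'.1 * s + (f j').1 < j'.1 * s + s := by omega
            _ = (j'.1 + 1) * s := by ring
            _ ≤ j.1 * s := Nat.mul_le_mul_right s hlt
            _ ≤ j.1 * s + (f j).1 := Nat.le_add_right _ _
          omega
      refine card_mul_le_topSum (T := Finset.univ.image fun j : Fin L => ι j (f j)) ?_ ?_
      · rw [Finset.card_image_of_injective _ hinj, Finset.card_univ, Fintype.card_fin]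
      · intro n hn
        obtain ⟨j, -, rfl⟩ := Finset.mem_image.mp hn
        exact hf j
    · exact topSum_le_card_mul hLN.le fun n => hcA n
  have hmap : ∀ (p : Fin N × Fin K) (S : Set ℝ), MeasurableSet S →
      P (W p ⁻¹' S) = gammaMeasure (mk p.2) (mk p.2) S := by
    intro p S hS
    rw [← hdist p, Measure.map_apply (hmeas p) hS]
  calc P _ ≤ P (A ∪ B) := measure_mono hincl
  _ ≤ P A + P B := measure_union_le A B
  _ ≤ N * gammaMeasure (mk k) (mk k) (Ici t₁)
        + L * (gammaMeasure (mk k) (mk k) (Iio t₀)) ^ s := by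
      gcongr
      · -- A bound
        refine le_trans (measure_iUnion_fintype_le P _) ?_
        have hone : ∀ n : Fin N, P (W (n, k) ⁻¹' Ioi t₁) ≤ gammaMeasure (mk k) (mk k) (Ici t₁) := by
          intro n
          rw [hmap (n, k) _ measurableSet_Ioi]
          exact measure_mono Ioi_subset_Ici_self
        calc ∑ n : Fin N, P (W (n, k) ⁻¹' Ioi t₁)
            ≤ ∑ _n : Fin N, gammaMeasure (mk k) (mk k) (Ici t₁) :=
              Finset.sum_le_sum fun n _ => hone n
        _ = N * gammaMeasure (mk k) (mk k) (Ici t₁) := by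
            rw [Finset.sum_const, Finset.card_univ, Fintype.card_fin, nsmul_eq_mul]
      · -- B bound
        refine le_trans (measure_iUnion_fintype_le P _) ?_
        have hone : ∀ j : Fin L, P (⋂ i : Fin s, W (ι j i, k) ⁻¹' Iio t₀)
            = (gammaMeasure (mk k) (mk k) (Iio t₀)) ^ s := by
          intro j
          have hset : (⋂ i : Fin s, W (ι j i, k) ⁻¹' Iio t₀)
              = ⋂ p ∈ (Finset.univ.image fun i : Fin s => ((ι j i, k) : Fin N × Fin K)),
                  W p ⁻¹' Iio t₀ := by
            ext ω
            simp [Finset.mem_image]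
          rw [hset, hindep.meas_biInter (fun p _ => ⟨Iio t₀, measurableSet_Iio, rfl⟩)]
          have hinj2 : Function.Injective (fun i : Fin s => ((ι j i, k) : Fin N × Fin K)) := by
            intro i i' hii'
            have : (ι j i).1 = (ι j i').1 := by
              simpa using congrArg (fun p : Fin N × Fin K => p.1.1) hii'
            simp only [hι_def] at this
            exact Fin.ext (by omega)
          rw [Finset.prod_image (fun i _ i' _ h => hinj2 h)]
          rw [Finset.prod_congr rfl (fun i _ => hmap (ι j i, k) _ measurableSet_Iio)]
          simp only []
          rw [Finset.prod_const, Finset.card_univ, Fintype.card_fin]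
        have heq : ∑ j : Fin L, P (⋂ i : Fin s, W (ι j i, k) ⁻¹' Iio t₀)
            = L * (gammaMeasure (mk k) (mk k) (Iio t₀)) ^ s := by
          rw [Finset.sum_congr rfl fun j _ => hone j, Finset.sum_const, Finset.card_univ,
            Fintype.card_fin, nsmul_eq_mul]
        exact heq.le

lemma det_sandwich {L : ℕ} {ρ βk mk NR T : ℝ} (hρ : 0 < ρ) (hβ : 0 < βk) (hm : 0 < mk)
    (hlog : 0 < Real.log NR)
    (hT1 : (L:ℝ) * (1 / 2 * Real.log NR / mk) ≤ T)
    (hT2 : T ≤ (L:ℝ) * (3 / 2 * Real.log NR / mk)) :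
    |Real.logb 2 (1 + ρ * βk * T) - Real.logb 2 (1 + ρ * βk * ((L:ℝ) / mk) * Real.log NR)| ≤ 1 := by
  set g : ℝ := ρ * βk * ((L:ℝ) / mk) * Real.log NR with hg_def
  have hg : 0 ≤ g := by
    have : (0:ℝ) ≤ (L:ℝ) / mk := by positivity
    have : (0:ℝ) ≤ ρ * βk * ((L:ℝ)/mk) := by positivity
    exact mul_nonneg this hlog.le
  have hgT1 : g / 2 ≤ ρ * βk * T := by
    have h := mul_le_mul_of_nonneg_left hT1 (by positivity : (0:ℝ) ≤ ρ * βk)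
    calc g / 2 = ρ * βk * ((L:ℝ) * (1 / 2 * Real.log NR / mk)) := by
          rw [hg_def]; field_simp
    _ ≤ ρ * βk * T := h
  have hgT2 : ρ * βk * T ≤ 3 / 2 * g := by
    have h := mul_le_mul_of_nonneg_left hT2 (by positivity : (0:ℝ) ≤ ρ * βk)
    calc ρ * βk * T ≤ ρ * βk * ((L:ℝ) * (3 / 2 * Real.log NR / mk)) := h
    _ = 3 / 2 * g := by rw [hg_def]; field_simp
  have hpos : (0:ℝ) < 1 + ρ * βk * T := by linarith
  have hpos2 : (0:ℝ) < 1 + g := by linarith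
  have hup : Real.logb 2 (1 + ρ * βk * T) ≤ Real.logb 2 (1 + g) + 1 := by
    calc Real.logb 2 (1 + ρ * βk * T) ≤ Real.logb 2 (2 * (1 + g)) := by
          apply (Real.logb_le_logb (by norm_num) hpos (by linarith)).mpr
          linarith
    _ = Real.logb 2 (1 + g) + 1 := by
          rw [Real.logb_mul (by norm_num) (ne_of_gt hpos2),
            Real.logb_self_eq_one (by norm_num)]
          ring
  have hlo : Real.logb 2 (1 + g) - 1 ≤ Real.logb 2 (1 + ρ * βk * T) := by
    calc Real.logb 2 (1 + g) - 1 = Real.logb 2 ((1 + g) / 2) := by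
          rw [Real.logb_div (ne_of_gt hpos2) (by norm_num),
            Real.logb_self_eq_one (by norm_num)]
    _ ≤ Real.logb 2 (1 + ρ * βk * T) := by
          apply (Real.logb_le_logb (by norm_num) (by linarith) hpos).mpr
          linarith
  rw [abs_le]
  constructor <;> [linarith; linarith]

lemma gamma_pow_bound {μ : Measure ℝ} [IsProbabilityMeasure μ] {t₀ r : ℝ} (hr0 : 0 ≤ r)
    (h : ENNReal.ofReal r ≤ μ (Ici t₀)) (s : ℕ) :
    μ (Iio t₀) ^ s ≤ ENNReal.ofReal (Real.exp (-(s:ℝ) * r)) := by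
  have hr1 : r ≤ 1 := ENNReal.ofReal_le_one.mp (h.trans prob_le_one)
  have h2 : μ (Iio t₀) ≤ ENNReal.ofReal (1 - r) := by
    have e1 : μ (Iio t₀) = 1 - μ (Ici t₀) := by
      rw [← compl_Ici]; exact prob_compl_eq_one_sub measurableSet_Ici
    rw [e1, show (ENNReal.ofReal (1 - r)) = 1 - ENNReal.ofReal r by
      rw [ENNReal.ofReal_sub _ hr0, ENNReal.ofReal_one]]
    exact tsub_le_tsub_left h 1
  calc μ (Iio t₀) ^ s ≤ (ENNReal.ofReal (1 - r)) ^ s := pow_le_pow_left' h2 s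
  _ = ENNReal.ofReal ((1 - r) ^ s) := by rw [ENNReal.ofReal_pow (by linarith)]
  _ ≤ ENNReal.ofReal (Real.exp (-(s:ℝ) * r)) := by
      apply ENNReal.ofReal_le_ofReal
      have hb : 1 - r ≤ Real.exp (-r) := by
        have := Real.add_one_le_exp (-r); linarith
      calc (1 - r) ^ s ≤ (Real.exp (-r)) ^ s := pow_le_pow_left₀ (by linarith) hb s
      _ = Real.exp (-(s:ℝ) * r) := by
          rw [← Real.exp_nat_mul]; congr 1; ring

lemma log_natCast_tendsto : Tendsto (fun N : ℕ => Real.log N) atTop atTop :=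
  Real.tendsto_log_atTop.comp tendsto_natCast_atTop_atTop

lemma rb_term1_tendsto {mk Ck : ℝ} (hm : 0 < mk) :
    Tendsto (fun N : ℕ => (N:ℝ) * (Ck * Real.exp (-(9 / 10 * mk * (3 / 2 * Real.log N / mk)))))
      atTop (nhds 0) := by
  have hEq : (fun N : ℕ => Ck * Real.exp (-(7 / 20 * Real.log N)))
      =ᶠ[atTop] (fun N : ℕ =>
        (N:ℝ) * (Ck * Real.exp (-(9 / 10 * mk * (3 / 2 * Real.log N / mk))))) := by
    filter_upwards [eventually_ge_atTop 1] with N hN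
    have hN0 : (0:ℝ) < N := by exact_mod_cast hN
    have harg : 9 / 10 * mk * (3 / 2 * Real.log N / mk) = 27 / 20 * Real.log N := by
      field_simp; ring
    rw [harg]
    calc Ck * Real.exp (-(7 / 20 * Real.log N))
        = Ck * (Real.exp (Real.log N) * Real.exp (-(27 / 20 * Real.log N))) := by
          rw [← Real.exp_add]; congr 1; ring
    _ = (N:ℝ) * (Ck * Real.exp (-(27 / 20 * Real.log N))) := by
          rw [Real.exp_log hN0]; ring
  apply Tendsto.congr' hEq
  have h1 : Tendsto (fun N : ℕ => -(7 / 20 * Real.log N)) atTop atBot := by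
    have h2 := tendsto_neg_atTop_atBot.comp
      (log_natCast_tendsto.const_mul_atTop (by norm_num : (0:ℝ) < 7 / 20))
    exact h2.congr (fun N => rfl)
  simpa using (Real.tendsto_exp_atBot.comp h1).const_mul Ck

lemma rb_term2_tendsto {mk ck : ℝ} (L : ℕ) (hL : 1 ≤ L) (hm : 1 / 2 ≤ mk) (hck : 0 < ck) :
    Tendsto (fun N : ℕ => (L:ℝ) * Real.exp (-(((N / L : ℕ)):ℝ)
        * (ck * Real.exp (-(mk * (1 / 2 * Real.log N / mk))) / (1 / 2 * Real.log N / mk + 1))))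
      atTop (nhds 0) := by
  have hm0 : 0 < mk := lt_of_lt_of_le (by norm_num) hm
  have hL0 : (0:ℝ) < L := by exact_mod_cast hL
  -- main: the exponent argument tends to atTop
  have hsr : Tendsto (fun N : ℕ => (((N / L : ℕ)):ℝ)
      * (ck * Real.exp (-(mk * (1 / 2 * Real.log N / mk))) / (1 / 2 * Real.log N / mk + 1)))
      atTop atTop := by
    have hlowtend : Tendsto (fun N : ℕ => ck / (18 * L) * Real.exp (3 / 8 * Real.log N))
        atTop atTop := by
      apply Tendsto.const_mul_atTop (by positivity : (0:ℝ) < ck / (18 * L))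
      apply Real.tendsto_exp_atTop.comp
      exact (log_natCast_tendsto.const_mul_atTop (by norm_num : (0:ℝ) < 3 / 8)).congr
        (fun N => by ring)
    apply tendsto_atTop_mono' atTop ?_ hlowtend
    · -- eventual inequality
      filter_upwards [eventually_ge_atTop (2 * L), eventually_ge_atTop 1] with N h2L hN1
      have hN0 : (0:ℝ) < N := by exact_mod_cast hN1
      set u : ℝ := Real.log N with hu_def
      have hu0 : 0 ≤ u := Real.log_natCast_nonneg N
      have harg : mk * (1 / 2 * u / mk) = u / 2 := by field_simp
      have ht0 : 1 / 2 * u / mk + 1 ≤ 9 * Real.exp (u / 8) := by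
        have h1 : 1 / 2 * u / mk ≤ u := by
          rw [div_le_iff₀ hm0]
          nlinarith
        have h2 := Real.add_one_le_exp (u / 8)
        have h3 := Real.exp_pos (u / 8)
        linarith
      have hden0 : 0 < 1 / 2 * u / mk + 1 := by positivity
      have hrlow : ck * Real.exp (-(u / 2)) / (9 * Real.exp (u / 8))
          ≤ ck * Real.exp (-(mk * (1 / 2 * u / mk))) / (1 / 2 * u / mk + 1) := by
        rw [harg]
        exact (div_le_div_iff_of_pos_left (by positivity) (by positivity) hden0).mpr ht0
      have hslow : (N:ℝ) / (2 * L) ≤ (((N / L : ℕ)):ℝ) := by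
        have hmod : N ≤ L * (N / L) + L := by
          have h1 := Nat.div_add_mod N L
          have h2 := Nat.mod_lt N (show 0 < L from hL)
          omega
        have hmodR : (N:ℝ) ≤ (L:ℝ) * ((N / L : ℕ):ℝ) + L := by exact_mod_cast hmod
        have h2LR : 2 * (L:ℝ) ≤ N := by exact_mod_cast h2L
        rw [div_le_iff₀ (by positivity)]
        nlinarith
      calc ck / (18 * L) * Real.exp (3 / 8 * u)
          = (N:ℝ) / (2 * L) * (ck * Real.exp (-(u / 2)) / (9 * Real.exp (u / 8))) := by
            nth_rewrite 1 [show (N:ℝ) = Real.exp u from (Real.exp_log hN0).symm]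
            rw [show Real.exp (3 / 8 * u)
                = Real.exp u * Real.exp (-(u / 2)) / Real.exp (u / 8) by
              rw [← Real.exp_add, ← Real.exp_sub]; congr 1; ring]
            field_simp
            ring
      _ ≤ (N:ℝ) / (2 * L) * (ck * Real.exp (-(mk * (1 / 2 * u / mk))) / (1 / 2 * u / mk + 1)) := by
            apply mul_le_mul_of_nonneg_left hrlow (by positivity)
      _ ≤ (((N / L : ℕ)):ℝ)
            * (ck * Real.exp (-(mk * (1 / 2 * u / mk))) / (1 / 2 * u / mk + 1)) := by
            apply mul_le_mul_of_nonneg_right hslow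
            positivity
  have h2 : Tendsto (fun N : ℕ => Real.exp (-(((N / L : ℕ)):ℝ)
      * (ck * Real.exp (-(mk * (1 / 2 * Real.log N / mk))) / (1 / 2 * Real.log N / mk + 1))))
      atTop (nhds 0) := by
    apply Real.tendsto_exp_atBot.comp
    exact (tendsto_neg_atTop_atBot.comp hsr).congr (fun N => by simp [neg_mul])
  simpa using h2.const_mul (L:ℝ)
theorem stmt5
    (K L : ℕ) (hK : 1 ≤ K) (hL : 1 ≤ L)
    (ρ : ℝ) (hρ : 0 < ρ)
    (β m : Fin K → ℝ) (hβ : ∀ k, 0 < β k) (hm : ∀ k, 1 / 2 ≤ m k)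
    (Ω : ℕ → Type) [∀ N, MeasurableSpace (Ω N)]
    (P : ∀ N, Measure (Ω N)) [∀ N, IsProbabilityMeasure (P N)]
    (W : ∀ N : ℕ, Fin N × Fin K → Ω N → ℝ)
    (hmeas : ∀ N : ℕ, L < N → ∀ p : Fin N × Fin K, Measurable (W N p))
    (hindep : ∀ N : ℕ, L < N →
      iIndepFun (W N) (P N))
    (hdist : ∀ N : ℕ, L < N → ∀ p : Fin N × Fin K,
      (P N).map (W N p) = gammaMeasure (m p.2) (m p.2)) :
    ∀ ε : ℝ, 0 < ε →
      Tendsto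
        (fun N : ℕ =>
          (P N) {ω | ε ≤
            |(∑ k : Fin K,
                Real.logb 2 (1 + ρ * β k * topSum L (fun n => W N (n, k) ω))) /
              (∑ k : Fin K,
                Real.logb 2 (1 + ρ * β k * ((L : ℝ) / m k) * Real.log N)) - 1|})
        atTop (nhds 0) := by
  intro ε hε
  have hm0 : ∀ k, 0 < m k := fun k => lt_of_lt_of_le (by norm_num) (hm k)
  choose C hC0 hC using fun k : Fin K => gamma_tail_upper (hm k)
  choose c hc0 hc using fun k : Fin K => gamma_tail_lower (hm k)
  -- the deterministic denominator
  set D : ℕ → ℝ :=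
    fun N => ∑ k : Fin K, Real.logb 2 (1 + ρ * β k * ((L : ℝ) / m k) * Real.log N) with hD_def
  -- D tends to atTop
  have hD : Tendsto D atTop atTop := by
    set k0 : Fin K := ⟨0, hK⟩
    have hc0pos : (0:ℝ) < ρ * β k0 * ((L : ℝ) / m k0) := by
      have hL' : (0:ℝ) < (L:ℝ) := by exact_mod_cast hL
      exact mul_pos (mul_pos hρ (hβ k0)) (div_pos hL' (hm0 k0))
    have hterm : Tendsto
        (fun N : ℕ => Real.logb 2 (1 + ρ * β k0 * ((L : ℝ) / m k0) * Real.log N))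
        atTop atTop := by
      have h1 : Tendsto (fun N : ℕ => 1 + ρ * β k0 * ((L : ℝ) / m k0) * Real.log N)
          atTop atTop :=
        tendsto_atTop_add_const_left atTop 1 (log_natCast_tendsto.const_mul_atTop hc0pos)
      exact (Real.tendsto_logb_atTop (by norm_num : (1:ℝ) < 2)).comp h1
    apply tendsto_atTop_mono' atTop ?_ hterm
    filter_upwards [eventually_ge_atTop 1] with N hN
    have hnn : ∀ k : Fin K, 0 ≤ Real.logb 2 (1 + ρ * β k * ((L : ℝ) / m k) * Real.log N) := by
      intro k
      apply Real.logb_nonneg (by norm_num)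
      have h1 : (0:ℝ) ≤ ρ * β k * ((L : ℝ) / m k) :=
        mul_nonneg (mul_nonneg hρ.le (hβ k).le) (div_nonneg (Nat.cast_nonneg L) (hm0 k).le)
      have h2 : (0:ℝ) ≤ Real.log N := Real.log_natCast_nonneg N
      nlinarith
    exact Finset.single_le_sum (fun k _ => hnn k) (Finset.mem_univ k0)
  -- the real bound and its limit
  set rb : ℕ → ℝ := fun N => ∑ k : Fin K,
    ((N:ℝ) * (C k * Real.exp (-(9 / 10 * m k * (3 / 2 * Real.log N / m k))))
      + (L:ℝ) * Real.exp (-(((N / L : ℕ)):ℝ)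
          * (c k * Real.exp (-(m k * (1 / 2 * Real.log N / m k)))
              / (1 / 2 * Real.log N / m k + 1)))) with hrb_def
  have hrb : Tendsto rb atTop (nhds 0) := by
    rw [hrb_def]
    have h := tendsto_finset_sum (Finset.univ : Finset (Fin K))
      (f := fun (k : Fin K) (N : ℕ) =>
        (N:ℝ) * (C k * Real.exp (-(9 / 10 * m k * (3 / 2 * Real.log N / m k))))
          + (L:ℝ) * Real.exp (-(((N / L : ℕ)):ℝ)
              * (c k * Real.exp (-(m k * (1 / 2 * Real.log N / m k)))
                  / (1 / 2 * Real.log N / m k + 1))))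
      (fun k _ => by
        simpa using (rb_term1_tendsto (mk := m k) (Ck := C k) (hm0 k)).add
          (rb_term2_tendsto (mk := m k) (ck := c k) L hL (hm k) (hc0 k)))
    simpa using h
  -- eventual threshold for t₀ ≥ 1
  have ht0ev : ∀ᶠ N : ℕ in atTop, ∀ k : Fin K, 1 ≤ 1 / 2 * Real.log N / m k := by
    rw [eventually_all]
    intro k
    have h1 : Tendsto (fun N : ℕ => 1 / 2 * Real.log N / m k) atTop atTop := by
      have h2 := log_natCast_tendsto.atTop_mul_const
        (show (0:ℝ) < 1 / (2 * m k) from div_pos one_pos (mul_pos two_pos (hm0 k)))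
      exact h2.congr fun N => by ring
    exact h1.eventually_ge_atTop 1
  -- the eventual bound on the probability
  have hEv : ∀ᶠ N : ℕ in atTop,
      (P N) {ω | ε ≤
        |(∑ k : Fin K,
            Real.logb 2 (1 + ρ * β k * topSum L (fun n => W N (n, k) ω))) /
          (∑ k : Fin K,
            Real.logb 2 (1 + ρ * β k * ((L : ℝ) / m k) * Real.log N)) - 1|}
        ≤ ENNReal.ofReal (rb N) := by
    filter_upwards [eventually_gt_atTop L, eventually_ge_atTop 2,
      hD.eventually_gt_atTop ((K:ℝ) / ε), ht0ev] with N hLN h2 hDN ht0N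
    have hN1 : (1:ℝ) < (N:ℕ) := by exact_mod_cast lt_of_lt_of_le one_lt_two h2
    have hlogpos : 0 < Real.log N := Real.log_pos hN1
    have hKpos : (0:ℝ) < K := by exact_mod_cast hK
    have hDpos : 0 < D N := lt_of_le_of_lt (by positivity) hDN
    -- inclusion into the union of bad events
    have hincl : {ω | ε ≤
        |(∑ k : Fin K,
            Real.logb 2 (1 + ρ * β k * topSum L (fun n => W N (n, k) ω))) /
          (∑ k : Fin K,
            Real.logb 2 (1 + ρ * β k * ((L : ℝ) / m k) * Real.log N)) - 1|}
        ⊆ ⋃ k : Fin K, {ω | ¬((L:ℝ) * (1 / 2 * Real.log N / m k)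
              ≤ topSum L (fun n => W N (n, k) ω) ∧
            topSum L (fun n => W N (n, k) ω) ≤ (L:ℝ) * (3 / 2 * Real.log N / m k))} := by
      intro ω hω
      by_contra hcon
      simp only [Set.mem_iUnion, Set.mem_setOf_eq, not_exists, not_not] at hcon
      rw [Set.mem_setOf_eq] at hω
      have hsand : ∀ k : Fin K,
          |Real.logb 2 (1 + ρ * β k * topSum L (fun n => W N (n, k) ω))
            - Real.logb 2 (1 + ρ * β k * ((L : ℝ) / m k) * Real.log N)| ≤ 1 := fun k =>
        det_sandwich hρ (hβ k) (hm0 k) hlogpos (hcon k).1 (hcon k).2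
      set SA : ℝ := ∑ k : Fin K,
        Real.logb 2 (1 + ρ * β k * topSum L (fun n => W N (n, k) ω)) with hSA_def
      have hdiff : |SA - D N| ≤ (K:ℝ) := by
        rw [hSA_def, hD_def, ← Finset.sum_sub_distrib]
        calc |∑ k : Fin K, (Real.logb 2 (1 + ρ * β k * topSum L (fun n => W N (n, k) ω))
              - Real.logb 2 (1 + ρ * β k * ((L : ℝ) / m k) * Real.log N))|
            ≤ ∑ k : Fin K, |Real.logb 2 (1 + ρ * β k * topSum L (fun n => W N (n, k) ω))
              - Real.logb 2 (1 + ρ * β k * ((L : ℝ) / m k) * Real.log N)| :=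
              Finset.abs_sum_le_sum_abs _ _
        _ ≤ ∑ _k : Fin K, (1:ℝ) := Finset.sum_le_sum fun k _ => hsand k
        _ = (K:ℝ) := by simp
      have hlt : |SA / D N - 1| < ε := by
        rw [show SA / D N - 1 = (SA - D N) / D N by field_simp, abs_div, abs_of_pos hDpos]
        have hKD : (K:ℝ) < D N * ε := by
          have := (div_lt_iff₀ hε).mp hDN
          linarith
        calc |SA - D N| / D N ≤ (K:ℝ) / D N := by gcongr
        _ < ε := by rw [div_lt_iff₀ hDpos]; linarith
      exact absurd hω (not_le.mpr hlt)
    -- measure computation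
    calc (P N) {ω | ε ≤
        |(∑ k : Fin K,
            Real.logb 2 (1 + ρ * β k * topSum L (fun n => W N (n, k) ω))) /
          (∑ k : Fin K,
            Real.logb 2 (1 + ρ * β k * ((L : ℝ) / m k) * Real.log N)) - 1|}
        ≤ (P N) (⋃ k : Fin K, {ω | ¬((L:ℝ) * (1 / 2 * Real.log N / m k)
              ≤ topSum L (fun n => W N (n, k) ω) ∧
            topSum L (fun n => W N (n, k) ω) ≤ (L:ℝ) * (3 / 2 * Real.log N / m k))}) :=
          measure_mono hincl
    _ ≤ ∑ k : Fin K, (P N) {ω | ¬((L:ℝ) * (1 / 2 * Real.log N / m k)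
              ≤ topSum L (fun n => W N (n, k) ω) ∧
            topSum L (fun n => W N (n, k) ω) ≤ (L:ℝ) * (3 / 2 * Real.log N / m k))} :=
          measure_iUnion_fintype_le _ _
    _ ≤ ∑ k : Fin K, ENNReal.ofReal
          ((N:ℝ) * (C k * Real.exp (-(9 / 10 * m k * (3 / 2 * Real.log N / m k))))
            + (L:ℝ) * Real.exp (-(((N / L : ℕ)):ℝ)
                * (c k * Real.exp (-(m k * (1 / 2 * Real.log N / m k)))
                    / (1 / 2 * Real.log N / m k + 1)))) := by
        apply Finset.sum_le_sum
        intro k _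
        haveI : IsProbabilityMeasure (gammaMeasure (m k) (m k)) :=
          isProbabilityMeasure_gammaMeasure (hm0 k) (hm0 k)
        have ht0k : 1 ≤ 1 / 2 * Real.log N / m k := ht0N k
        have ht1k : 1 ≤ 3 / 2 * Real.log N / m k := by
          have e : 3 / 2 * Real.log N / m k = 3 * (1 / 2 * Real.log N / m k) := by ring
          rw [e]; linarith
        refine (prob_bad_le (P N) hL hLN m (W N) (hmeas N hLN) (hindep N hLN) (hdist N hLN)
          k (1 / 2 * Real.log N / m k) (3 / 2 * Real.log N / m k)).trans ?_
        have h1 : (N:ℝ≥0∞) * gammaMeasure (m k) (m k) (Ici (3 / 2 * Real.log N / m k))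
            ≤ ENNReal.ofReal
              ((N:ℝ) * (C k * Real.exp (-(9 / 10 * m k * (3 / 2 * Real.log N / m k))))) := by
          rw [ENNReal.ofReal_mul (by positivity), ENNReal.ofReal_natCast]
          exact mul_le_mul_right (hC k _ ht1k) _
        have h2 : (L:ℝ≥0∞) * (gammaMeasure (m k) (m k)) (Iio (1 / 2 * Real.log N / m k))
              ^ (N / L)
            ≤ ENNReal.ofReal ((L:ℝ) * Real.exp (-(((N / L : ℕ)):ℝ)
                * (c k * Real.exp (-(m k * (1 / 2 * Real.log N / m k)))
                    / (1 / 2 * Real.log N / m k + 1)))) := by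
          rw [ENNReal.ofReal_mul (by positivity), ENNReal.ofReal_natCast]
          have hr0 : (0:ℝ) ≤ c k * Real.exp (-(m k * (1 / 2 * Real.log N / m k)))
              / (1 / 2 * Real.log N / m k + 1) :=
            div_nonneg (mul_nonneg (hc0 k).le (Real.exp_nonneg _)) (by linarith)
          exact mul_le_mul_right (gamma_pow_bound hr0 (hc k _ ht0k) (N / L)) _
        refine (add_le_add h1 h2).trans ?_
        rw [← ENNReal.ofReal_add
          (mul_nonneg (Nat.cast_nonneg N) (mul_nonneg (hC0 k).le (Real.exp_nonneg _)))
          (mul_nonneg (Nat.cast_nonneg L) (Real.exp_nonneg _))]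
    _ = ENNReal.ofReal (rb N) := by
        rw [hrb_def, ← ENNReal.ofReal_sum_of_nonneg (fun k _ =>
          add_nonneg
            (mul_nonneg (Nat.cast_nonneg N) (mul_nonneg (hC0 k).le (Real.exp_nonneg _)))
            (mul_nonneg (Nat.cast_nonneg L) (Real.exp_nonneg _)))]
  -- squeeze
  have hofReal : Tendsto (fun N : ℕ => ENNReal.ofReal (rb N)) atTop (nhds 0) := by
    simpa using ENNReal.tendsto_ofReal hrb
  exact tendsto_of_tendsto_of_tendsto_of_le_of_le' tendsto_const_nhds hofReal
    (Eventually.of_forall fun N => zero_le) hEv
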